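/- Let F : ℝ^d → ℝ be differentiable with L-Lipschitz gradient, let ξ be a random vector with i.i.d. Rademacher entries, and μ > 0. Then the one-point perturbation estimator ĝ = ((F(θ + μξ) − F(θ))/μ) ξ satisfies ‖E[ĝ] − ∇F(θ)‖ ≤ (L μ d^{3/2})/2, so the bias vanishes as μ → 0. -/

import Mathlib

open RealInnerProductSpace

/-- The Rademacher sign vector in `ℝ^d` associated to `σ : Fin d → Bool`. -/
def radVec (d : ℕ) (σ : Fin d → Bool) : EuclideanSpace ℝ (Fin d) :=
  WithLp.toLp 2 (fun i => if σ i then 1 else -1)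

lemma norm_radVec (d : ℕ) (σ : Fin d → Bool) : ‖radVec d σ‖ = Real.sqrt d := by
  rw [EuclideanSpace.norm_eq]
  congr 1
  have : ∀ i : Fin d, radVec d σ i ^ 2 = 1 := by
    intro i
    by_cases h : σ i <;> simp [radVec, h]
  simp [this]

lemma sum_rad_prod (d : ℕ) (i j : Fin d) (hij : i ≠ j) :
    ∑ σ : Fin d → Bool, radVec d σ i * radVec d σ j = 0 := by
  set f : (Fin d → Bool) → ℝ := fun σ => radVec d σ i * radVec d σ j with hf
  have hinv : Function.Involutive (fun σ : Fin d → Bool => Function.update σ j (!σ j)) := by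
    intro σ
    funext k
    by_cases hk : k = j
    · subst hk; simp
    · simp [Function.update_of_ne hk]
  have hneg : ∀ σ, f ((hinv.toPerm _) σ) = - f σ := by
    intro σ
    simp only [hf, Function.Involutive.coe_toPerm]
    have h1 : radVec d (Function.update σ j (!σ j)) i = radVec d σ i := by
      simp [radVec, Function.update_of_ne hij]
    have h2 : radVec d (Function.update σ j (!σ j)) j = - radVec d σ j := by
      by_cases h : σ j <;> simp [radVec, h]
    rw [h1, h2]; ring
  have := Equiv.sum_comp (hinv.toPerm _) f
  have h2 : ∑ σ, f ((hinv.toPerm _) σ) = - ∑ σ, f σ := by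
    rw [← Finset.sum_neg_distrib]
    exact Finset.sum_congr rfl fun σ _ => hneg σ
  rw [h2] at this
  linarith

lemma sum_rad_diag (d : ℕ) (i : Fin d) :
    ∑ σ : Fin d → Bool, radVec d σ i * radVec d σ i = 2 ^ d := by
  have : ∀ σ : Fin d → Bool, radVec d σ i * radVec d σ i = 1 := by
    intro σ; by_cases h : σ i <;> simp [radVec, h]
  rw [Finset.sum_congr rfl fun σ _ => this σ]
  simp [Finset.card_univ]

lemma sum_rad (d : ℕ) (g : EuclideanSpace ℝ (Fin d)) :
    ∑ σ : Fin d → Bool, ⟪g, radVec d σ⟫ • radVec d σ = ((2:ℝ) ^ d) • g := by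
  refine PiLp.ext fun i => ?_
  have happ : (∑ σ : Fin d → Bool, ⟪g, radVec d σ⟫ • radVec d σ) i
      = ∑ σ : Fin d → Bool, ⟪g, radVec d σ⟫ * radVec d σ i := by
    rw [show (∑ σ : Fin d → Bool, ⟪g, radVec d σ⟫ • radVec d σ) i
        = ∑ σ : Fin d → Bool, (⟪g, radVec d σ⟫ • radVec d σ) i from
      by rw [WithLp.ofLp_sum, Finset.sum_apply]]
    simp
  rw [happ]
  have hinner : ∀ σ : Fin d → Bool, ⟪g, radVec d σ⟫ = ∑ j, g j * radVec d σ j := by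
    intro σ
    simp [PiLp.inner_apply, RCLike.inner_apply, mul_comm]
  calc ∑ σ : Fin d → Bool, ⟪g, radVec d σ⟫ * radVec d σ i
      = ∑ σ : Fin d → Bool, ∑ j, g j * (radVec d σ j * radVec d σ i) := by
        refine Finset.sum_congr rfl fun σ _ => ?_
        rw [hinner σ, Finset.sum_mul]
        exact Finset.sum_congr rfl fun j _ => by ring
    _ = ∑ j, g j * ∑ σ : Fin d → Bool, radVec d σ j * radVec d σ i := by
        rw [Finset.sum_comm]
        exact Finset.sum_congr rfl fun j _ => by rw [Finset.mul_sum]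
    _ = ((2:ℝ) ^ d) * g i := by
        rw [Finset.sum_eq_single i]
        · rw [sum_rad_diag]; push_cast; ring
        · intro j _ hji
          rw [sum_rad_prod d j i hji, mul_zero]
        · simp
    _ = (((2:ℝ) ^ d) • g) i := by simp

lemma taylor_quad {d : ℕ} {L : ℝ} (hL : 0 ≤ L)
    {F : EuclideanSpace ℝ (Fin d) → ℝ} (hF : Differentiable ℝ F)
    (hLip : ∀ x y : EuclideanSpace ℝ (Fin d),
      ‖gradient F x - gradient F y‖ ≤ L * ‖x - y‖)
    (x v : EuclideanSpace ℝ (Fin d)) :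
    |F (x + v) - F x - ⟪gradient F x, v⟫| ≤ L / 2 * ‖v‖ ^ 2 := by
  set g := gradient F x with hg
  set f : ℝ → ℝ := fun t => F (x + t • v) - F x - t * ⟪g, v⟫ with hfdef
  set f' : ℝ → ℝ := fun t => ⟪gradient F (x + t • v) - g, v⟫ with hf'def
  have hline : ∀ t : ℝ, HasDerivAt (fun s : ℝ => x + s • v) v t := by
    intro t
    simpa using ((hasDerivAt_id t).smul_const v).const_add x
  have hfderiv : ∀ t : ℝ, HasDerivAt f (f' t) t := by
    intro t
    have h1 : HasDerivAt (fun s : ℝ => F (x + s • v)) ⟪gradient F (x + t • v), v⟫ t := by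
      have := ((hF (x + t • v)).hasGradientAt.hasFDerivAt).comp_hasDerivAt t (hline t)
      simpa [InnerProductSpace.toDual_apply_apply, Function.comp_def] using this
    have h2 : HasDerivAt (fun s : ℝ => F x + s * ⟪g, v⟫) ⟪g, v⟫ t := by
      simpa using ((hasDerivAt_id t).mul_const ⟪g, v⟫).const_add (F x)
    have := h1.sub h2
    have heq : (fun s : ℝ => F (x + s • v) - (F x + s * ⟪g, v⟫)) = f := by
      funext s; simp [hfdef]; ring
    rw [show ((fun s : ℝ => F (x + s • v)) - fun s => F x + s * ⟪g, v⟫) = f from heq] at this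
    refine this.congr_deriv ?_
    simp [hf'def, inner_sub_left]
  set B : ℝ → ℝ := fun t => L / 2 * ‖v‖ ^ 2 * t ^ 2 with hBdef
  have hB : ∀ t : ℝ, HasDerivAt B (L * ‖v‖ ^ 2 * t) t := by
    intro t
    have := ((hasDerivAt_pow 2 t).const_mul (L / 2 * ‖v‖ ^ 2))
    refine this.congr_deriv ?_
    push_cast; ring
  have bound : ∀ t ∈ Set.Ico (0:ℝ) 1, ‖f' t‖ ≤ L * ‖v‖ ^ 2 * t := by
    intro t ht
    have h1 : ‖f' t‖ ≤ ‖gradient F (x + t • v) - g‖ * ‖v‖ := by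
      simpa [hf'def] using abs_real_inner_le_norm (gradient F (x + t • v) - g) v
    have h2 : ‖gradient F (x + t • v) - g‖ ≤ L * (t * ‖v‖) := by
      have := hLip (x + t • v) x
      simpa [norm_smul, abs_of_nonneg ht.1] using this
    calc ‖f' t‖ ≤ ‖gradient F (x + t • v) - g‖ * ‖v‖ := h1
      _ ≤ L * (t * ‖v‖) * ‖v‖ := by
          apply mul_le_mul_of_nonneg_right h2 (norm_nonneg v)
      _ = L * ‖v‖ ^ 2 * t := by ring
  have key := image_norm_le_of_norm_deriv_right_le_deriv_boundary
    (fun t _ => (hfderiv t).continuousAt.continuousWithinAt)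
    (fun t _ => (hfderiv t).hasDerivWithinAt)
    (by simp [hfdef, hBdef] : ‖f 0‖ ≤ B 0)
    hB bound
  have h1 := key (by norm_num : (1:ℝ) ∈ Set.Icc (0:ℝ) 1)
  simpa [hfdef, hBdef] using h1

/-- Bias bound for the one-point Rademacher perturbation estimator: if `F` is differentiable
with `L`-Lipschitz gradient, `ξ` is a uniform Rademacher vector and `μ > 0`, then
`‖E[((F(θ+μξ)-F(θ))/μ)ξ] - ∇F(θ)‖ ≤ L μ d^{3/2} / 2`. -/
theorem stmt_2 (d : ℕ) (L : ℝ) (hL : 0 ≤ L)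
    (F : EuclideanSpace ℝ (Fin d) → ℝ) (hF : Differentiable ℝ F)
    (hLip : ∀ x y : EuclideanSpace ℝ (Fin d),
      ‖gradient F x - gradient F y‖ ≤ L * ‖x - y‖)
    (θ : EuclideanSpace ℝ (Fin d)) (μ : ℝ) (hμ : 0 < μ) :
    ‖((2 : ℝ) ^ d)⁻¹ • (∑ σ : Fin d → Bool,
        ((F (θ + μ • radVec d σ) - F θ) / μ) • radVec d σ)
      - gradient F θ‖ ≤ L * μ * (d : ℝ) ^ ((3 : ℝ) / 2) / 2 := by
  set g := gradient F θ with hg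
  set c : (Fin d → Bool) → ℝ := fun σ => (F (θ + μ • radVec d σ) - F θ) / μ with hc
  have h2d : ((2:ℝ) ^ d) ≠ 0 := by positivity
  -- rewrite g as averaged sum
  have hgrw : g = ((2:ℝ) ^ d)⁻¹ • ∑ σ : Fin d → Bool, ⟪g, radVec d σ⟫ • radVec d σ := by
    rw [sum_rad, smul_smul, inv_mul_cancel₀ h2d, one_smul]
  have hsplit : ((2 : ℝ) ^ d)⁻¹ • (∑ σ : Fin d → Bool, c σ • radVec d σ) - g
      = ((2:ℝ) ^ d)⁻¹ • ∑ σ : Fin d → Bool, (c σ - ⟪g, radVec d σ⟫) • radVec d σ := by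
    have h1 : ∑ σ : Fin d → Bool, (c σ - ⟪g, radVec d σ⟫) • radVec d σ
        = (∑ σ : Fin d → Bool, c σ • radVec d σ) - ((2:ℝ)^d) • g := by
      rw [← sum_rad d g, ← Finset.sum_sub_distrib]
      exact Finset.sum_congr rfl fun σ _ => (sub_smul _ _ _)
    rw [h1, smul_sub, smul_smul, inv_mul_cancel₀ h2d, one_smul]
  -- per-term bound
  have hterm : ∀ σ : Fin d → Bool,
      ‖(c σ - ⟪g, radVec d σ⟫) • radVec d σ‖ ≤ L * μ * (d:ℝ) * Real.sqrt d / 2 := by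
    intro σ
    have hq := taylor_quad hL hF hLip θ (μ • radVec d σ)
    have hnv : ‖μ • radVec d σ‖ = μ * Real.sqrt d := by
      rw [norm_smul, norm_radVec, Real.norm_eq_abs, abs_of_pos hμ]
    have hinner : ⟪g, μ • radVec d σ⟫ = μ * ⟪g, radVec d σ⟫ := real_inner_smul_right g _ μ
    have hbound : |F (θ + μ • radVec d σ) - F θ - μ * ⟪g, radVec d σ⟫|
        ≤ L / 2 * (μ * Real.sqrt d) ^ 2 := by
      rw [← hinner, ← hnv]; exact hq
    have hsq : (μ * Real.sqrt d) ^ 2 = μ ^ 2 * d := by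
      rw [mul_pow, Real.sq_sqrt (Nat.cast_nonneg d)]
    have hcdiff : |c σ - ⟪g, radVec d σ⟫| ≤ L * μ * d / 2 := by
      have : c σ - ⟪g, radVec d σ⟫
          = (F (θ + μ • radVec d σ) - F θ - μ * ⟪g, radVec d σ⟫) / μ := by
        field_simp [hc]
        rw [sub_mul]; simp only [hc]; rw [div_mul_cancel₀ _ hμ.ne']
      rw [this, abs_div, abs_of_pos hμ, div_le_iff₀ hμ]
      calc |F (θ + μ • radVec d σ) - F θ - μ * ⟪g, radVec d σ⟫|
          ≤ L / 2 * (μ * Real.sqrt d) ^ 2 := hbound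
        _ = L * μ * d / 2 * μ := by rw [hsq]; ring
    rw [norm_smul, norm_radVec, Real.norm_eq_abs]
    calc |c σ - ⟪g, radVec d σ⟫| * Real.sqrt d
        ≤ (L * μ * d / 2) * Real.sqrt d :=
          mul_le_mul_of_nonneg_right hcdiff (Real.sqrt_nonneg d)
      _ = L * μ * (d:ℝ) * Real.sqrt d / 2 := by ring
  -- combine
  have hsum : ‖∑ σ : Fin d → Bool, (c σ - ⟪g, radVec d σ⟫) • radVec d σ‖
      ≤ (2:ℝ) ^ d * (L * μ * (d:ℝ) * Real.sqrt d / 2) := by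
    calc ‖∑ σ : Fin d → Bool, (c σ - ⟪g, radVec d σ⟫) • radVec d σ‖
        ≤ ∑ σ : Fin d → Bool, ‖(c σ - ⟪g, radVec d σ⟫) • radVec d σ‖ :=
          norm_sum_le _ _
      _ ≤ ∑ _σ : Fin d → Bool, (L * μ * (d:ℝ) * Real.sqrt d / 2) :=
          Finset.sum_le_sum fun σ _ => hterm σ
      _ = (2:ℝ) ^ d * (L * μ * (d:ℝ) * Real.sqrt d / 2) := by
          simp [Finset.card_univ, mul_comm]
  have hrpow : (d : ℝ) ^ ((3 : ℝ) / 2) = (d:ℝ) * Real.sqrt d := by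
    rcases Nat.eq_zero_or_pos d with h0 | hd
    · subst h0
      rw [Nat.cast_zero, Real.zero_rpow (by norm_num), Real.sqrt_zero]; ring
    · have hdpos : (0:ℝ) < d := Nat.cast_pos.2 hd
      have h32 : (d:ℝ) ^ ((3:ℝ)/2) = (d:ℝ) ^ ((1:ℝ) + (1:ℝ)/2) := by norm_num
      rw [h32, Real.rpow_add hdpos, Real.rpow_one, Real.sqrt_eq_rpow]
  rw [hsplit, norm_smul, Real.norm_eq_abs, abs_inv, abs_of_pos (by positivity : (0:ℝ) < (2:ℝ)^d)]
  rw [hrpow]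
  calc ((2:ℝ) ^ d)⁻¹ * ‖∑ σ : Fin d → Bool, (c σ - ⟪g, radVec d σ⟫) • radVec d σ‖
      ≤ ((2:ℝ) ^ d)⁻¹ * ((2:ℝ) ^ d * (L * μ * (d:ℝ) * Real.sqrt d / 2)) := by
        apply mul_le_mul_of_nonneg_left hsum (by positivity)
    _ = L * μ * ((d:ℝ) * Real.sqrt d) / 2 := by
        rw [inv_mul_cancel_left₀ h2d]; ring
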